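/- For N ∈ ℕ and r ≥ 1, let G_N = (V_N, E_N) be the graph with vertex set V_N = {1,...,N} and an edge (n,m) whenever ρ(n,m) ≤ r, where ρ(n,m) = min{ |q_i(n) − q_j(m)| : 1 ≤ i,j ≤ ℓ }. Then there exists a constant A₀ > 0 depending only on q₁,...,q_ℓ such that every ball of radius 1 in G_N contains at most A₀ r vertices; consequently there is a constant A₁ > 0 such that every ball of radius 3 in G_N contains at most A₁ r³ vertices. -/

import Mathlib

open MeasureTheory ProbabilityTheory Filter
open scoped ENNReal NNReal

/-- The graph `G_N` on `V_N = {1,…,N}` with an edge `(n,m)` whenever `n ≠ m` and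
`ρ(n,m) = min{|q_i(n) − q_j(m)| : 1 ≤ i,j ≤ ℓ} ≤ r`. -/
def qGraph (ℓ : ℕ) (q : Fin ℓ → ℕ → ℕ) (N r : ℕ) : SimpleGraph ℕ where
  Adj n m := n ≠ m ∧ n ∈ Finset.Icc 1 N ∧ m ∈ Finset.Icc 1 N ∧
    ∃ i j : Fin ℓ, ((q i n : ℤ) - (q j m : ℤ)).natAbs ≤ r
  symm := by
    constructor
    rintro n m ⟨h1, h2, h3, i, j, h4⟩
    exact ⟨Ne.symm h1, h3, h2, j, i, by rw [← Int.natAbs_neg, neg_sub]; exact h4⟩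
  loopless := ⟨fun n h => h.1 rfl⟩

lemma walk3_decomp {V : Type*} {G : SimpleGraph V} {n m : V} (p : G.Walk n m)
    (hp : p.length ≤ 3) :
    ∃ a b : V, (a = n ∨ G.Adj n a) ∧ (b = a ∨ G.Adj a b) ∧ (m = b ∨ G.Adj b m) := by
  match p with
  | .nil => exact ⟨n, n, Or.inl rfl, Or.inl rfl, Or.inl rfl⟩
  | .cons h .nil => exact ⟨n, n, Or.inl rfl, Or.inl rfl, Or.inr h⟩
  | .cons h (.cons h2 .nil) => exact ⟨_, _, Or.inr h, Or.inl rfl, Or.inr h2⟩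
  | .cons h (.cons h2 (.cons h3 .nil)) => exact ⟨_, _, Or.inr h, Or.inr h2, Or.inr h3⟩
  | .cons h (.cons h2 (.cons h3 (.cons h4 p))) =>
      simp [SimpleGraph.Walk.length_cons] at hp; omega

/-- there is `A₀ > 0` depending only on `q₁,…,q_ℓ` such that every ball of radius
`1` in `G_N` has at most `A₀ r` vertices; consequently there is `A₁ > 0` such that every ball of
radius `3` has at most `A₁ r³` vertices. -/
theorem statement11
    (ℓ k : ℕ) (hkℓ : k < ℓ) (q : Fin ℓ → ℕ → ℕ)
    (α : ℝ) (hα : α ∈ Set.Ioo (0 : ℝ) 1)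
    (hq1 : ∀ j : Fin ℓ, k ≤ (j : ℕ) → ∀ᶠ n : ℕ in atTop,
      (n : ℝ) ^ α ≤ (q j (n + 1) : ℝ) - (q j n : ℝ))
    (hq2 : ∀ ε : ℝ, 0 < ε → ∀ i : Fin ℓ, k ≤ (i : ℕ) → ∀ h : (i : ℕ) + 1 < ℓ,
      Tendsto (fun n : ℕ => (q ⟨(i : ℕ) + 1, h⟩ ⌊ε * (n : ℝ)⌋₊ : ℤ) - (q i n : ℤ))
        atTop atTop)
    (hq3 : ∀ j : Fin ℓ, (j : ℕ) < k → ∀ n : ℕ, q j n = ((j : ℕ) + 1) * n)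
 :
    (∃ A₀ : ℕ, 0 < A₀ ∧ ∀ N r : ℕ, 1 ≤ r → ∀ n : ℕ,
      ({m : ℕ | m = n ∨ (qGraph ℓ q N r).Adj n m}).ncard ≤ A₀ * r) ∧
    ∃ A₁ : ℕ, 0 < A₁ ∧ ∀ N r : ℕ, 1 ≤ r → ∀ n : ℕ,
      ({m : ℕ | ∃ p : (qGraph ℓ q N r).Walk n m, p.length ≤ 3}).ncard ≤ A₁ * r ^ 3 := by
  obtain ⟨hα0, hα1⟩ := hα
  -- Step 1: a threshold after which every q j increases by at least 1 per step
  have hmono : ∃ n₀ : ℕ, 1 ≤ n₀ ∧ ∀ j : Fin ℓ, ∀ m, n₀ ≤ m → q j m + 1 ≤ q j (m + 1) := by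
    have h : ∀ᶠ n : ℕ in atTop, ∀ j : Fin ℓ, k ≤ (j : ℕ) →
        (n : ℝ) ^ α ≤ (q j (n + 1) : ℝ) - (q j n : ℝ) := by
      rw [eventually_all]
      intro j
      by_cases hj : k ≤ (j : ℕ)
      · exact (hq1 j hj).mono fun n hn _ => hn
      · filter_upwards with n hjk; exact absurd hjk hj
    obtain ⟨a, ha⟩ := eventually_atTop.1 h
    refine ⟨max a 1, le_max_right _ _, fun j m hm => ?_⟩
    by_cases hj : k ≤ (j : ℕ)
    · have h1 : (m : ℝ) ^ α ≤ (q j (m + 1) : ℝ) - (q j m : ℝ) :=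
        ha m (le_trans (le_max_left _ _) hm) j hj
      have hm1 : (1 : ℝ) ≤ (m : ℝ) := by
        exact_mod_cast le_trans (le_max_right a 1) hm
      have h2 : (1 : ℝ) ≤ (m : ℝ) ^ α := by
        calc (1 : ℝ) = 1 ^ α := (Real.one_rpow α).symm
        _ ≤ (m : ℝ) ^ α := Real.rpow_le_rpow zero_le_one hm1 hα0.le
      have : ((q j m : ℝ)) + 1 ≤ (q j (m + 1) : ℝ) := by linarith
      exact_mod_cast this
    · push_neg at hj
      rw [hq3 j hj m, hq3 j hj (m + 1)]
      nlinarith [j.1.zero_le]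
  obtain ⟨n₀, hn₀1, hn₀⟩ := hmono
  -- Step 2: growth
  have hgrow : ∀ j : Fin ℓ, ∀ a b : ℕ, n₀ ≤ a → a ≤ b → q j a + (b - a) ≤ q j b := by
    intro j a b hn₀a hab
    induction b, hab using Nat.le_induction with
    | base => simp
    | succ b hab ih =>
        have := hn₀ j b (le_trans hn₀a hab)
        omega
  -- Step 3: each "interval preimage" is covered by a finset of size n₀ + 2r + 1
  have hT : ∀ (j : Fin ℓ) (c : ℤ) (r : ℕ), ∃ F : Finset ℕ, F.card ≤ n₀ + 2 * r + 1 ∧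
      ∀ m : ℕ, ((q j m : ℤ) - c).natAbs ≤ r → m ∈ F := by
    intro j c r
    by_cases hex : ∃ m, ((q j m : ℤ) - c).natAbs ≤ r ∧ n₀ ≤ m
    · obtain ⟨m₀, ⟨hm₀T, hm₀n₀⟩, hm₀min⟩ :
          ∃ m₀, (((q j m₀ : ℤ) - c).natAbs ≤ r ∧ n₀ ≤ m₀) ∧
            ∀ m, (((q j m : ℤ) - c).natAbs ≤ r ∧ n₀ ≤ m) → m₀ ≤ m :=
        ⟨Nat.find hex, Nat.find_spec hex, fun m hm => Nat.find_min' hex hm⟩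
      refine ⟨Finset.range n₀ ∪ Finset.Icc m₀ (m₀ + 2 * r), ?_, ?_⟩
      · calc (Finset.range n₀ ∪ Finset.Icc m₀ (m₀ + 2 * r)).card
            ≤ (Finset.range n₀).card + (Finset.Icc m₀ (m₀ + 2 * r)).card :=
              Finset.card_union_le _ _
        _ ≤ n₀ + 2 * r + 1 := by rw [Finset.card_range, Nat.card_Icc]; omega
      · intro m hmT
        rcases lt_or_ge m n₀ with hmn | hmn
        · exact Finset.mem_union_left _ (Finset.mem_range.2 hmn)
        · have hm₀m : m₀ ≤ m := hm₀min m ⟨hmT, hmn⟩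
          have hg := hgrow j m₀ m hm₀n₀ hm₀m
          refine Finset.mem_union_right _ (Finset.mem_Icc.2 ⟨hm₀m, ?_⟩)
          omega
    · refine ⟨Finset.range n₀, by rw [Finset.card_range]; omega, fun m hmT => ?_⟩
      push_neg at hex
      exact Finset.mem_range.2 (by by_contra hc; exact absurd (hex m hmT) (by omega))
  choose T hTcard hTmem using hT
  -- Step 4: radius-1 covering finset
  set B : ℕ → ℕ := fun r => 1 + ℓ * ℓ * (n₀ + 2 * r + 1) with hBdef
  have hS₁ : ∀ N r n : ℕ, ∃ F : Finset ℕ,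
      (∀ m : ℕ, (m = n ∨ (qGraph ℓ q N r).Adj n m) → m ∈ F) ∧ F.card ≤ B r := by
    intro N r n
    refine ⟨insert n (Finset.univ.biUnion fun i : Fin ℓ =>
      Finset.univ.biUnion fun j : Fin ℓ => T j (q i n) r), ?_, ?_⟩
    · rintro m (rfl | ⟨h1, h2, h3, i, j, h4⟩)
      · exact Finset.mem_insert_self _ _
      · have h4' : ((q j m : ℤ) - (q i n : ℤ)).natAbs ≤ r := by
          rw [← Int.natAbs_neg, neg_sub]; exact h4
        refine Finset.mem_insert_of_mem ?_
        refine Finset.mem_biUnion.2 ⟨i, Finset.mem_univ _, ?_⟩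
        exact Finset.mem_biUnion.2 ⟨j, Finset.mem_univ _, hTmem j (q i n) r m h4'⟩
    · have hb : (Finset.univ.biUnion fun i : Fin ℓ =>
          Finset.univ.biUnion fun j : Fin ℓ => T j (q i n) r).card
          ≤ ℓ * (ℓ * (n₀ + 2 * r + 1)) := by
        have hinner : ∀ i : Fin ℓ,
            (Finset.univ.biUnion fun j : Fin ℓ => T j (q i n) r).card ≤ ℓ * (n₀ + 2 * r + 1) :=
          fun i => by
            simpa [Finset.card_univ] using
              Finset.card_biUnion_le_card_mul Finset.univ _ (n₀ + 2 * r + 1)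
                (fun j _ => hTcard j (q i n) r)
        simpa [Finset.card_univ] using
          Finset.card_biUnion_le_card_mul Finset.univ _ (ℓ * (n₀ + 2 * r + 1))
            (fun i _ => hinner i)
      have hi := Finset.card_insert_le n (Finset.univ.biUnion fun i : Fin ℓ =>
          Finset.univ.biUnion fun j : Fin ℓ => T j (q i n) r)
      have : B r = ℓ * (ℓ * (n₀ + 2 * r + 1)) + 1 := by simp [hBdef]; ring
      omega
  choose F hFmem hFcard using hS₁
  have hBbound : ∀ r : ℕ, 1 ≤ r → B r ≤ (1 + ℓ * ℓ * (n₀ + 3)) * r := by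
    intro r hr
    simp only [hBdef]
    have h1 : ℓ * ℓ * n₀ ≤ ℓ * ℓ * n₀ * r := Nat.le_mul_of_pos_right _ hr
    have h2 : ℓ * ℓ ≤ ℓ * ℓ * r := Nat.le_mul_of_pos_right _ hr
    nlinarith [h1, h2, hr]
  set A₀ : ℕ := 1 + ℓ * ℓ * (n₀ + 3) with hA₀def
  have hA₀pos : 0 < A₀ := by omega
  constructor
  · refine ⟨A₀, hA₀pos, fun N r hr n => ?_⟩
    have hsub : {m : ℕ | m = n ∨ (qGraph ℓ q N r).Adj n m} ⊆ ↑(F N r n) :=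
      fun m hm => hFmem N r n m hm
    calc ({m : ℕ | m = n ∨ (qGraph ℓ q N r).Adj n m}).ncard
        ≤ (↑(F N r n) : Set ℕ).ncard := Set.ncard_le_ncard hsub (F N r n).finite_toSet
      _ = (F N r n).card := Set.ncard_coe_finset _
      _ ≤ B r := hFcard N r n
      _ ≤ A₀ * r := hBbound r hr
  · refine ⟨A₀ ^ 3, pow_pos hA₀pos 3, fun N r hr n => ?_⟩
    set G3 : Finset ℕ := (F N r n).biUnion fun a => (F N r a).biUnion fun b => F N r b with hG3
    have hsub : {m : ℕ | ∃ p : (qGraph ℓ q N r).Walk n m, p.length ≤ 3} ⊆ ↑G3 := by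
      rintro m ⟨p, hp⟩
      obtain ⟨a, b, ha, hb, hm⟩ := walk3_decomp p hp
      refine Finset.mem_coe.2 (Finset.mem_biUnion.2 ⟨a, hFmem N r n a ha, ?_⟩)
      exact Finset.mem_biUnion.2 ⟨b, hFmem N r a b hb, hFmem N r b m hm⟩
    have hBr := hBbound r hr
    have hG3card : G3.card ≤ A₀ ^ 3 * r ^ 3 := by
      have h1 : G3.card ≤ (F N r n).card * (B r * B r) := by
        refine Finset.card_biUnion_le_card_mul _ _ _ fun a _ => ?_
        refine le_trans (Finset.card_biUnion_le_card_mul _ _ _ fun b _ => hFcard N r b) ?_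
        exact Nat.mul_le_mul_right _ (hFcard N r a)
      calc G3.card ≤ (F N r n).card * (B r * B r) := h1
        _ ≤ (A₀ * r) * ((A₀ * r) * (A₀ * r)) := by
            have := hFcard N r n
            exact Nat.mul_le_mul (le_trans this hBr) (Nat.mul_le_mul hBr hBr)
        _ = A₀ ^ 3 * r ^ 3 := by ring
    calc ({m : ℕ | ∃ p : (qGraph ℓ q N r).Walk n m, p.length ≤ 3}).ncard
        ≤ (↑G3 : Set ℕ).ncard := Set.ncard_le_ncard hsub G3.finite_toSet
      _ = G3.card := Set.ncard_coe_finset _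
      _ ≤ A₀ ^ 3 * r ^ 3 := hG3card
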